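/- (Konno–Kuroda resolvent identity, part 2) With the notation above, for every z ∈ ρ(H₀) ∩ ρ(H_g) one has R_{H_g}(z) = R_{H₀}(z) + g R_{H₀}(z) A* [1_𝒦 − g A R_{H₀}(z) A*]^{-1} A R_{H₀}(z). -/

import Mathlib

open MeasureTheory

/-- Konno–Kuroda resolvent identity, part 2:
`R_{H_g}(z) = R_{H₀}(z) + g R_{H₀}(z) A* [1 − g A R_{H₀}(z) A*]⁻¹ A R_{H₀}(z)`. -/
theorem stmt_3 {H K : Type*} [NormedAddCommGroup H] [InnerProductSpace ℂ H] [CompleteSpace H]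
    [NormedAddCommGroup K] [InnerProductSpace ℂ K] [CompleteSpace K]
    (H0 : H →ₗ[ℂ] H) (hsym : ∀ x y : H, (inner ℂ (H0 x) y : ℂ) = inner ℂ x (H0 y))
    (A : H →L[ℂ] K) (g : ℝ) (hg : g ≠ 0) (z : ℂ)
    (Hg : H →ₗ[ℂ] H)
    (hHg : ∀ x, Hg x = H0 x - (g : ℂ) • (ContinuousLinearMap.adjoint A (A x)))
    (R0 Rg : H →L[ℂ] H)
    (hR0₁ : ∀ x, H0 (R0 x) - z • (R0 x) = x) (hR0₂ : ∀ x, R0 (H0 x - z • x) = x)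
    (hRg₁ : ∀ x, Hg (Rg x) - z • (Rg x) = x) (hRg₂ : ∀ x, Rg (Hg x - z • x) = x)
    (B : K →L[ℂ] K)
    (hB₁ : ((1 : K →L[ℂ] K) - (g : ℂ) • (A ∘L R0 ∘L ContinuousLinearMap.adjoint A)) * B = 1)
    (hB₂ : B * ((1 : K →L[ℂ] K) - (g : ℂ) • (A ∘L R0 ∘L ContinuousLinearMap.adjoint A)) = 1) :
    ∀ x, Rg x = R0 x + (g : ℂ) • R0 (ContinuousLinearMap.adjoint A (B (A (R0 x)))) := by
  intro x
  set T := ContinuousLinearMap.adjoint A with hT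
  set a := R0 x with ha
  set b := R0 (T (B (A a))) with hb
  -- key identity from hB₁ applied to A a
  have hBapp : B (A a) - (g : ℂ) • (A b) = A a := by
    have h := congrArg (fun f : K →L[ℂ] K => f (A a)) hB₁
    simpa [ContinuousLinearMap.sub_apply, ContinuousLinearMap.smul_apply,
      ContinuousLinearMap.comp_apply, ContinuousLinearMap.mul_apply,
      ContinuousLinearMap.one_apply, hb] using h
  have hTapp : T (B (A a)) - (g : ℂ) • T (A b) = T (A a) := by
    have := congrArg T hBapp
    simpa [map_sub, _root_.map_smul] using this
  have h1 : H0 a = x + z • a := by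
    have := hR0₁ x; rw [← ha] at this; linear_combination (norm := module) this
  have h2 : H0 b = T (B (A a)) + z • b := by
    have := hR0₁ (T (B (A a))); rw [← hb] at this; linear_combination (norm := module) this
  have key : Hg (a + (g : ℂ) • b) - z • (a + (g : ℂ) • b) = x := by
    rw [hHg]
    simp only [map_add, _root_.map_smul, h1, h2, ← hTapp]
    module
  calc Rg x = Rg (Hg (a + (g : ℂ) • b) - z • (a + (g : ℂ) • b)) := by rw [key]
    _ = a + (g : ℂ) • b := hRg₂ _
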